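/- Let R be a finite set of pairwise-disjoint leftward-directed horizontal rays and V a finite set of pairwise-disjoint vertical segments, each intersecting at least one ray of R. In the SSR token-passing algorithm (MOD-SSR), for any ray r ∈ R and any iteration k ≥ 1: if a segment v ∈ V_k intersects r in the input, then v intersects some ray r' ∈ R_k whose token T_{r'} contains r. -/
import Mathlib


attribute [local instance] Classical.propDecidable

/-- A leftward-directed horizontal ray, given by its right endpoint `(x, y)`:
the point set `{(x', y) : x' ≤ x}`. -/
structure Ray where
  x : ℝ
  y : ℝ

/-- A vertical segment with `x`-coordinate `x` and `y`-range `[lo, hi]`. -/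
structure VSeg where
  x : ℝ
  lo : ℝ
  hi : ℝ

/-- A leftward-directed ray intersects a vertical segment iff the segment's
`x`-coordinate is at most the ray's right endpoint and the ray's height lies
in the segment's `y`-range. -/
def hits (r : Ray) (v : VSeg) : Prop :=
  v.x ≤ r.x ∧ v.lo ≤ r.y ∧ r.y ≤ v.hi

/-- A ray `r` of the surviving set `Rset` is critical if some surviving segment
intersects `r` and no other surviving ray. -/
def critical (Rset : Finset Ray) (Vset : Finset VSeg) (r : Ray) : Prop :=
  r ∈ Rset ∧ ∃ v ∈ Vset, hits r v ∧ ∀ r' ∈ Rset, hits r' v → r' = r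

/-- `r'` lies just above `r` within the set `D` of rays. -/
def justAbove (D : Finset Ray) (r r' : Ray) : Prop :=
  r ∈ D ∧ r' ∈ D ∧ r.y < r'.y ∧ ∀ r'' ∈ D, ¬ (r.y < r''.y ∧ r''.y < r'.y)

/-- An execution trace of the MOD-SSR token-passing algorithm on the SSR instance
`(R, V)`.  `Rs i, Vs i, Ss i, Tok i` are the surviving rays, surviving segments,
heuristic solution and tokens at the end of iteration `i`; `pivot i` is the ray
with smallest right-endpoint `x`-coordinate that passes its token in iteration `i`. -/
structure ModSSRTrace (R : Finset Ray) (V : Finset VSeg) where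
  steps : ℕ
  Rs : ℕ → Finset Ray
  Vs : ℕ → Finset VSeg
  Ss : ℕ → Finset Ray
  Tok : ℕ → Ray → Finset Ray
  pivot : ℕ → Ray
  init_R : Rs 0 = R
  init_V : Vs 0 = V
  init_S : Ss 0 = ∅
  init_T : ∀ r, Tok 0 r = {r}
  running : ∀ i < steps, Vs i ≠ ∅
  /-- step (a): collect all rays critical after the previous iteration. -/
  S_step : ∀ i, 1 ≤ i → i ≤ steps →
    Ss i = Ss (i-1) ∪ (Rs (i-1)).filter (fun r => critical (Rs (i-1)) (Vs (i-1)) r)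
  /-- step (b): delete all segments intersecting some solution ray. -/
  V_step : ∀ i, 1 ≤ i → i ≤ steps →
    Vs i = (Vs (i-1)).filter (fun v => ∀ r ∈ Ss i, ¬ hits r v)
  /-- step (c): the pivot is a surviving non-solution ray of smallest right-endpoint
  `x`-coordinate. -/
  pivot_mem : ∀ i, 1 ≤ i → i ≤ steps → pivot i ∈ Rs (i-1) \ Ss i
  pivot_min : ∀ i, 1 ≤ i → i ≤ steps → ∀ r ∈ Rs (i-1) \ Ss i, (pivot i).x ≤ r.x
  /-- token passing: each label `x` in the pivot's token migrates to a neighbour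
  (just above / just below in `Rs (i-1) \ Ss i`) whenever some surviving segment
  intersects `x`, the pivot and that neighbour; then the pivot's token is emptied. -/
  Tok_step : ∀ i, 1 ≤ i → i ≤ steps → ∀ r' : Ray,
    Tok i r' =
      if r' = pivot i then ∅
      else if justAbove (Rs (i-1) \ Ss i) (pivot i) r'
              ∨ justAbove (Rs (i-1) \ Ss i) r' (pivot i) then
        Tok (i-1) r' ∪ (Tok (i-1) (pivot i)).filter
          (fun x => ∃ v ∈ Vs i, hits x v ∧ hits (pivot i) v ∧ hits r' v)
      else Tok (i-1) r'
  /-- deletion of the pivot and the solution rays. -/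
  R_step : ∀ i, 1 ≤ i → i ≤ steps →
    Rs i = (Rs (i-1) \ Ss i).erase (pivot i)
  /-- termination: no segment is left. -/
  term : Vs steps = ∅

/-- Observation 1: in any execution of MOD-SSR, for any input ray `r`
and iteration `k ≥ 1`, if a surviving segment `v ∈ V_k` intersects `r` in the input,
then `v` intersects some surviving ray `r' ∈ R_k` whose token contains `r`. -/
theorem modSSR_token_invariant (R : Finset Ray) (V : Finset VSeg)
    (hVok : ∀ v ∈ V, v.lo ≤ v.hi)
    (hRdisj : ∀ r ∈ R, ∀ r' ∈ R, r ≠ r' → r.y ≠ r'.y)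
    (hVdisj : ∀ v ∈ V, ∀ w ∈ V, v ≠ w → v.x ≠ w.x)
    (hfeas : ∀ v ∈ V, ∃ r ∈ R, hits r v)
    (t : ModSSRTrace R V)
    (r : Ray) (hr : r ∈ R) (k : ℕ) (hk1 : 1 ≤ k) (hk : k ≤ t.steps)
    (v : VSeg) (hv : v ∈ t.Vs k) (hrv : hits r v) :
    ∃ r' ∈ t.Rs k, hits r' v ∧ r ∈ t.Tok k r' := by
  -- surviving rays are input rays
  have hRsub : ∀ i, i ≤ t.steps → t.Rs i ⊆ R := by
    intro i
    induction i with
    | zero => intro _; rw [t.init_R]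
    | succ n ih =>
      intro hle x hx
      rw [t.R_step (n+1) (Nat.le_add_left 1 n) hle] at hx
      simp only [Nat.add_sub_cancel_left, Nat.succ_sub_one] at hx
      exact ih (Nat.le_of_succ_le hle)
        (Finset.mem_sdiff.mp (Finset.mem_of_mem_erase hx)).1
  have main : ∀ k, k ≤ t.steps → ∀ v ∈ t.Vs k, hits r v →
      ∃ r' ∈ t.Rs k, hits r' v ∧ r ∈ t.Tok k r' := by
    intro k
    induction k with
    | zero =>
      intro _ v hv hrv
      refine ⟨r, ?_, hrv, ?_⟩
      · rw [t.init_R]; exact hr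
      · rw [t.init_T]; simp
    | succ n ih =>
      intro hle v hv hrv
      have h1 : 1 ≤ n + 1 := Nat.le_add_left 1 n
      have hpred : n + 1 - 1 = n := rfl
      have hvi := hv
      have hvstep := t.V_step (n+1) h1 hle
      rw [hpred] at hvstep
      rw [hvstep, Finset.mem_filter] at hv
      obtain ⟨hvn, hvS⟩ := hv
      obtain ⟨r', hr'n, hr'v, hrT⟩ := ih (Nat.le_of_succ_le hle) v hvn hrv
      have hr'S : r' ∉ t.Ss (n+1) := fun h => hvS r' h hr'v
      have hD : r' ∈ t.Rs n \ t.Ss (n+1) := Finset.mem_sdiff.mpr ⟨hr'n, hr'S⟩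
      have hRstep := t.R_step (n+1) h1 hle
      rw [hpred] at hRstep
      have hTstep := t.Tok_step (n+1) h1 hle
      simp only [hpred] at hTstep
      set p := t.pivot (n+1) with hp
      have hpmem := t.pivot_mem (n+1) h1 hle
      rw [hpred] at hpmem
      have hpmin := t.pivot_min (n+1) h1 hle
      rw [hpred] at hpmin
      by_cases hrp : r' = p
      · -- r' is the pivot; find a neighbour
        rw [hrp] at hr'v hrT hD
        -- there exists another surviving ray hit by v
        have hex : ∃ s ∈ t.Rs n, hits s v ∧ s ≠ p := by
          by_contra hcon
          push_neg at hcon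
          have hcrit : critical (t.Rs n) (t.Vs n) p := by
            refine ⟨(Finset.mem_sdiff.mp hpmem).1, v, hvn, hr'v, ?_⟩
            intro s hs hsv
            exact hcon s hs hsv
          have hSstep := t.S_step (n+1) h1 hle
          rw [hpred] at hSstep
          have : p ∈ t.Ss (n+1) := by
            rw [hSstep]
            exact Finset.mem_union_right _
              (Finset.mem_filter.mpr ⟨(Finset.mem_sdiff.mp hpmem).1, hcrit⟩)
          exact (Finset.mem_sdiff.mp hpmem).2 this
        obtain ⟨s, hsn, hsv, hsp⟩ := hex
        have hsS : s ∉ t.Ss (n+1) := fun h => hvS s h hsv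
        have hsD : s ∈ t.Rs n \ t.Ss (n+1) := Finset.mem_sdiff.mpr ⟨hsn, hsS⟩
        have hyne : s.y ≠ p.y :=
          hRdisj s (hRsub n (Nat.le_of_succ_le hle) hsn) p
            (hRsub n (Nat.le_of_succ_le hle) (Finset.mem_sdiff.mp hpmem).1) hsp
        set D := t.Rs n \ t.Ss (n+1) with hDdef
        -- helper: any ray of D with y between two hit heights is hit
        have hhit : ∀ q ∈ D, v.lo ≤ q.y → q.y ≤ v.hi → hits q v := by
          intro q hq hlo hhi
          exact ⟨le_trans hr'v.1 (hpmin q hq), hlo, hhi⟩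
        rcases lt_or_gt_of_ne hyne with hlt | hgt
        · -- s below p : take q just below p
          have hne : (D.filter (fun u => u.y < p.y)).Nonempty :=
            ⟨s, Finset.mem_filter.mpr ⟨hsD, hlt⟩⟩
          obtain ⟨q, hqmem, hqmax⟩ := Finset.exists_max_image _ (fun u => u.y) hne
          rw [Finset.mem_filter] at hqmem
          obtain ⟨hqD, hqy⟩ := hqmem
          have hqs : s.y ≤ q.y := hqmax s (Finset.mem_filter.mpr ⟨hsD, hlt⟩)
          have hqv : hits q v := hhit q hqD (le_trans hsv.2.1 hqs) (le_trans (le_of_lt hqy) hr'v.2.2)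
          have hqp : q ≠ p := fun h => absurd (h ▸ hqy) (lt_irrefl p.y)
          have hJA : justAbove D q p := by
            refine ⟨hqD, hpmem, hqy, ?_⟩
            intro u hu ⟨hu1, hu2⟩
            have := hqmax u (Finset.mem_filter.mpr ⟨hu, hu2⟩)
            exact absurd hu1 (not_lt.mpr this)
          refine ⟨q, ?_, hqv, ?_⟩
          · rw [hRstep]; exact Finset.mem_erase.mpr ⟨hqp, hqD⟩
          · rw [hTstep q, if_neg hqp, if_pos (Or.inr hJA)]
            exact Finset.mem_union_right _
              (Finset.mem_filter.mpr ⟨hrT, v, hvi, hrv, hr'v, hqv⟩)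
        · -- s above p : take q just above p
          have hne : (D.filter (fun u => p.y < u.y)).Nonempty :=
            ⟨s, Finset.mem_filter.mpr ⟨hsD, hgt⟩⟩
          obtain ⟨q, hqmem, hqmin⟩ := Finset.exists_min_image _ (fun u => u.y) hne
          rw [Finset.mem_filter] at hqmem
          obtain ⟨hqD, hqy⟩ := hqmem
          have hqs : q.y ≤ s.y := hqmin s (Finset.mem_filter.mpr ⟨hsD, hgt⟩)
          have hqv : hits q v := hhit q hqD (le_trans hr'v.2.1 (le_of_lt hqy)) (le_trans hqs hsv.2.2)
          have hqp : q ≠ p := fun h => absurd (h ▸ hqy) (lt_irrefl p.y)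
          have hJA : justAbove D p q := by
            refine ⟨hpmem, hqD, hqy, ?_⟩
            intro u hu ⟨hu1, hu2⟩
            have := hqmin u (Finset.mem_filter.mpr ⟨hu, hu1⟩)
            exact absurd hu2 (not_lt.mpr this)
          refine ⟨q, ?_, hqv, ?_⟩
          · rw [hRstep]; exact Finset.mem_erase.mpr ⟨hqp, hqD⟩
          · rw [hTstep q, if_neg hqp, if_pos (Or.inl hJA)]
            exact Finset.mem_union_right _
              (Finset.mem_filter.mpr ⟨hrT, v, hvi, hrv, hr'v, hqv⟩)
      · refine ⟨r', ?_, hr'v, ?_⟩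
        · rw [hRstep]; exact Finset.mem_erase.mpr ⟨hrp, hD⟩
        · rw [hTstep r', if_neg hrp]
          split
          · exact Finset.mem_union_left _ hrT
          · exact hrT
  exact main k hk v hv hrv
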